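/- (Covariance of scaled residual growth under heterogeneous skill-growth profiles.) In the HIP setting, for all integers t, t' with t − t' ≥ k + 1, if μ_t, μ_{t−1}, μ_{t'}, μ_{t'−1} are all nonzero, then cov( w_t/μ_t − w_{t−1}/μ_{t−1} , w_{t'}/μ_{t'} − w_{t'−1}/μ_{t'−1} ) = λ_t · λ_{t'} · Var(δ). -/

import Mathlib

open MeasureTheory ProbabilityTheory

/-- Covariance of two real-valued random variables under measure `P`. -/
noncomputable def cov {Ω : Type*} [MeasurableSpace Ω] (P : Measure Ω) (X Y : Ω → ℝ) : ℝ :=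
  ∫ ω, (X ω - ∫ a, X a ∂P) * (Y ω - ∫ a, Y a ∂P) ∂P

/-- Variance of a real-valued random variable under measure `P`. -/
noncomputable def Var {Ω : Type*} [MeasurableSpace Ω] (P : Measure Ω) (X : Ω → ℝ) : ℝ :=
  cov P X X

section API
variable {Ω : Type*} [MeasurableSpace Ω] (P : Measure Ω) [IsFiniteMeasure P]

lemma int_mul_L2 {f g : Ω → ℝ} (hf : MemLp f 2 P) (hg : MemLp g 2 P) :
    Integrable (fun ω => f ω * g ω) P := by
  have h := (((hf.add hg).integrable_sq.sub hf.integrable_sq).sub hg.integrable_sq).div_const 2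
  have he : (fun ω => f ω * g ω) = fun ω => (((f ω + g ω) ^ 2 - f ω ^ 2) - g ω ^ 2) / 2 := by
    funext ω; ring
  rw [he]; exact h

lemma cov_comm (X Y : Ω → ℝ) : cov P X Y = cov P Y X := by
  unfold cov
  exact integral_congr_ae (Filter.Eventually.of_forall fun ω => mul_comm _ _)

lemma cov_add_left {X X' Y : Ω → ℝ} (hX : MemLp X 2 P) (hX' : MemLp X' 2 P)
    (hY : MemLp Y 2 P) :
    cov P (fun ω => X ω + X' ω) Y = cov P X Y + cov P X' Y := by
  unfold cov
  have hi : ∫ a, X a + X' a ∂P = (∫ a, X a ∂P) + ∫ a, X' a ∂P :=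
    integral_add (hX.integrable one_le_two) (hX'.integrable one_le_two)
  rw [hi]
  have h1 : MemLp (fun ω => X ω - ∫ a, X a ∂P) 2 P := hX.sub (memLp_const _)
  have h2 : MemLp (fun ω => X' ω - ∫ a, X' a ∂P) 2 P := hX'.sub (memLp_const _)
  have h3 : MemLp (fun ω => Y ω - ∫ a, Y a ∂P) 2 P := hY.sub (memLp_const _)
  have he : (fun ω => (X ω + X' ω - ((∫ a, X a ∂P) + ∫ a, X' a ∂P)) * (Y ω - ∫ a, Y a ∂P))
      = fun ω => (X ω - ∫ a, X a ∂P) * (Y ω - ∫ a, Y a ∂P)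
        + (X' ω - ∫ a, X' a ∂P) * (Y ω - ∫ a, Y a ∂P) := by
    funext ω; ring
  rw [he]
  exact integral_add (int_mul_L2 P h1 h3) (int_mul_L2 P h2 h3)

lemma cov_add_right {X Y Y' : Ω → ℝ} (hX : MemLp X 2 P) (hY : MemLp Y 2 P)
    (hY' : MemLp Y' 2 P) :
    cov P X (fun ω => Y ω + Y' ω) = cov P X Y + cov P X Y' := by
  rw [cov_comm, cov_add_left P hY hY' hX, cov_comm P Y, cov_comm P Y']

lemma cov_smul_smul (c d : ℝ) (X Y : Ω → ℝ) :
    cov P (fun ω => c * X ω) (fun ω => d * Y ω) = c * d * cov P X Y := by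
  unfold cov
  rw [integral_const_mul, integral_const_mul]
  rw [show (c * d * ∫ ω, (X ω - ∫ a, X a ∂P) * (Y ω - ∫ a, Y a ∂P) ∂P)
      = ∫ ω, c * d * ((X ω - ∫ a, X a ∂P) * (Y ω - ∫ a, Y a ∂P)) ∂P from
    (integral_const_mul _ _).symm]
  exact integral_congr_ae (Filter.Eventually.of_forall fun ω => by ring)

end API

/-- Covariance of scaled residual growth under heterogeneous skill-growth profiles (HIP):
for `t - t' ≥ k + 1`,
`cov (w_t/μ_t − w_{t−1}/μ_{t−1}, w_{t'}/μ_{t'} − w_{t'−1}/μ_{t'−1}) = λ_t λ_{t'} Var δ`. -/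
theorem HIP_cov_scaled_growth
    {Ω : Type*} [MeasurableSpace Ω] (P : Measure Ω) [IsProbabilityMeasure P]
    (θ ε : ℤ → Ω → ℝ) (μ : ℤ → ℝ) (w : ℤ → Ω → ℝ)
    (hθ : ∀ t, MemLp (θ t) 2 P) (hε : ∀ t, MemLp (ε t) 2 P)
    (hw : ∀ t ω, w t ω = μ t * θ t ω + ε t ω)
    (k : ℕ) (hk : 1 ≤ k)
    (δ : Ω → ℝ) (lam : ℤ → ℝ) (ν : ℤ → Ω → ℝ)
    (hδ : MemLp δ 2 P) (hν : ∀ t, MemLp (ν t) 2 P)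
    (hHIP : ∀ (t : ℤ) (ω : Ω), θ t ω - θ (t - 1) ω = lam t * δ ω + ν t ω)
    (hδν : ∀ t : ℤ, cov P δ (ν t) = 0)
    (hνν : ∀ t t' : ℤ, t ≠ t' → cov P (ν t) (ν t') = 0)
    (hδε : ∀ t : ℤ, cov P δ (ε t) = 0)
    (hνε : ∀ t t' : ℤ, cov P (ν t) (ε t') = 0)
    (hεε : ∀ t t' : ℤ, (k : ℤ) ≤ |t - t'| → cov P (ε t) (ε t') = 0) :
    ∀ t t' : ℤ, (k : ℤ) + 1 ≤ t - t' →
      μ t ≠ 0 → μ (t - 1) ≠ 0 → μ t' ≠ 0 → μ (t' - 1) ≠ 0 →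
      cov P (fun ω => w t ω / μ t - w (t - 1) ω / μ (t - 1))
        (fun ω => w t' ω / μ t' - w (t' - 1) ω / μ (t' - 1)) =
        lam t * lam t' * Var P δ := by
  intro t t' hle h1 h2 h3 h4
  -- rewrite the two scaled growth functions
  have key : ∀ (s : ℤ), μ s ≠ 0 → μ (s - 1) ≠ 0 →
      (fun ω => w s ω / μ s - w (s - 1) ω / μ (s - 1))
        = fun ω => lam s * δ ω + ((1 : ℝ) * ν s ω
            + ((μ s)⁻¹ * ε s ω + (-(μ (s - 1))⁻¹) * ε (s - 1) ω)) := by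
    intro s hs hs1
    funext ω
    have h := hHIP s ω
    rw [hw, hw, add_div, add_div, mul_div_cancel_left₀ _ hs, mul_div_cancel_left₀ _ hs1,
      div_eq_inv_mul, div_eq_inv_mul]
    linear_combination h
  rw [key t h1 h2, key t' h3 h4]
  -- MemLp facts
  have m1 : MemLp (fun ω => lam t * δ ω) 2 P := hδ.const_mul _
  have m2 : MemLp (fun ω => (1 : ℝ) * ν t ω) 2 P := (hν t).const_mul _
  have m3 : MemLp (fun ω => (μ t)⁻¹ * ε t ω) 2 P := (hε t).const_mul _
  have m4 : MemLp (fun ω => (-(μ (t - 1))⁻¹) * ε (t - 1) ω) 2 P := (hε (t - 1)).const_mul _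
  have n1 : MemLp (fun ω => lam t' * δ ω) 2 P := hδ.const_mul _
  have n2 : MemLp (fun ω => (1 : ℝ) * ν t' ω) 2 P := (hν t').const_mul _
  have n3 : MemLp (fun ω => (μ t')⁻¹ * ε t' ω) 2 P := (hε t').const_mul _
  have n4 : MemLp (fun ω => (-(μ (t' - 1))⁻¹) * ε (t' - 1) ω) 2 P := (hε (t' - 1)).const_mul _
  have m34 : MemLp (fun ω => (μ t)⁻¹ * ε t ω + (-(μ (t - 1))⁻¹) * ε (t - 1) ω) 2 P := m3.add m4
  have m234 : MemLp (fun ω => (1 : ℝ) * ν t ω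
      + ((μ t)⁻¹ * ε t ω + (-(μ (t - 1))⁻¹) * ε (t - 1) ω)) 2 P := m2.add m34
  have n34 : MemLp (fun ω => (μ t')⁻¹ * ε t' ω + (-(μ (t' - 1))⁻¹) * ε (t' - 1) ω) 2 P := n3.add n4
  have n234 : MemLp (fun ω => (1 : ℝ) * ν t' ω
      + ((μ t')⁻¹ * ε t' ω + (-(μ (t' - 1))⁻¹) * ε (t' - 1) ω)) 2 P := n2.add n34
  have n1234 : MemLp (fun ω => lam t' * δ ω + ((1 : ℝ) * ν t' ω
      + ((μ t')⁻¹ * ε t' ω + (-(μ (t' - 1))⁻¹) * ε (t' - 1) ω))) 2 P := n1.add n234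
  -- expand
  rw [cov_add_left P m1 m234 n1234,
    cov_add_left P m2 m34 n1234,
    cov_add_left P m3 m4 n1234,
    cov_add_right P m1 n1 n234, cov_add_right P m1 n2 n34, cov_add_right P m1 n3 n4,
    cov_add_right P m2 n1 n234, cov_add_right P m2 n2 n34, cov_add_right P m2 n3 n4,
    cov_add_right P m3 n1 n234, cov_add_right P m3 n2 n34, cov_add_right P m3 n3 n4,
    cov_add_right P m4 n1 n234, cov_add_right P m4 n2 n34, cov_add_right P m4 n3 n4]
  simp only [cov_smul_smul]
  -- zero covariances
  have hne1 : t ≠ t' := by omega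
  have z_νν : cov P (ν t) (ν t') = 0 := hνν _ _ hne1
  have z_νδ : cov P (ν t) δ = 0 := by rw [cov_comm]; exact hδν t
  have z_εδ : ∀ s : ℤ, cov P (ε s) δ = 0 := fun s => by rw [cov_comm]; exact hδε s
  have z_εν : ∀ s s' : ℤ, cov P (ε s) (ν s') = 0 := fun s s' => by
    rw [cov_comm]; exact hνε s' s
  have habs : ∀ a b : ℤ, (k : ℤ) ≤ a - b → cov P (ε a) (ε b) = 0 := fun a b h =>
    hεε a b (le_trans h (le_abs_self _))
  have z1 : cov P (ε t) (ε t') = 0 := habs _ _ (by omega)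
  have z2 : cov P (ε t) (ε (t' - 1)) = 0 := habs _ _ (by omega)
  have z3 : cov P (ε (t - 1)) (ε t') = 0 := habs _ _ (by omega)
  have z4 : cov P (ε (t - 1)) (ε (t' - 1)) = 0 := habs _ _ (by omega)
  rw [hδν t', hδε t', hδε (t' - 1), z_νδ, z_νν, hνε t t', hνε t (t' - 1),
    z_εδ t, z_εδ (t - 1), z_εν t t', z_εν (t - 1) t', z1, z2, z3, z4]
  show _ = lam t * lam t' * cov P δ δ
  ring
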